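/- arXiv:2004.03050 — 2 statements merged into one kernel-verified Lean document; each statement's English description precedes it below -/
import Mathlib

section
/- For all integers n ≥ 2, k ≥ 1, and m ≥ 0 with m(n−1) ≥ k, there exist a finite set S, a normalized monotone submodular function f : 2^S → ℝ, action sets S_1, …, S_n ⊆ S, and an augmented greedy profile (x_i, z_i)_{i=1}^n for (f, (S_i), k, m) such that f(x_1 ∪ … ∪ x_n) = kn and OPT(f,(S_i),k) = 2k(n−1) + k, so that the achieved ratio is n/(2n−1). -/
open Finset

variable {α : Type*}

/-- `f` is monotone on finsets. -/
def IsMonotoneFn (f : Finset α → ℝ) : Prop := ∀ A B : Finset α, A ⊆ B → f A ≤ f B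

/-- `f` is submodular. -/
def IsSubmodularFn [DecidableEq α] (f : Finset α → ℝ) : Prop :=
  ∀ A B : Finset α, A ⊆ B → ∀ s ∉ B, f (insert s A) - f A ≥ f (insert s B) - f B

/-- Marginal contribution Δ(A|B) = f(A ∪ B) − f(B). -/
def marg [DecidableEq α] (f : Finset α → ℝ) (A B : Finset α) : ℝ := f (A ∪ B) - f B

/-- Δ^l(A|B): best marginal of a subset of `A` of size at most `l`. -/
noncomputable def margSup [DecidableEq α] (f : Finset α → ℝ) (l : ℕ) (A B : Finset α) : ℝ :=
  (A.powerset.filter (fun C => C.card ≤ l)).sup' ⟨∅, by simp⟩ (fun C => marg f C B)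

/-- Union of the first `i` sets: x_0 ∪ ⋯ ∪ x_{i-1}. -/
def pref [DecidableEq α] (x : ℕ → Finset α) (i : ℕ) : Finset α := (Finset.range i).biUnion x

/-- A nominal greedy profile. -/
def NomGreedy [DecidableEq α] (f : Finset α → ℝ) (Ss : ℕ → Finset α) (k n : ℕ)
    (x : ℕ → Finset α) : Prop :=
  ∀ i < n, x i ⊆ Ss i ∧ (x i).card ≤ k ∧
    ∀ c : Finset α, c ⊆ Ss i → c.card ≤ k → f (c ∪ pref x i) ≤ f (x i ∪ pref x i)

/-- An augmented greedy profile. -/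
def AugGreedy [DecidableEq α] (f : Finset α → ℝ) (Ss : ℕ → Finset α) (k m n : ℕ)
    (x z : ℕ → Finset α) : Prop :=
  ∀ i < n,
    (x i ⊆ Ss i ∪ pref z i ∧ (x i).card ≤ k ∧
      ∀ c : Finset α, c ⊆ Ss i ∪ pref z i → c.card ≤ k →
        f (c ∪ pref x i) ≤ f (x i ∪ pref x i)) ∧
    ∃ zk zr : Finset α,
      z i = zk ∪ zr ∧ zk ⊆ Ss i ∧ zk.card ≤ min k m ∧
      (∀ w : Finset α, w ⊆ Ss i → w.card ≤ min k m →
        marg f w (pref x (i + 1)) ≤ marg f zk (pref x (i + 1))) ∧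
      zr ⊆ Ss i ∧ zr.card ≤ m - k

/-- The optimal value OPT(f, (S_i), k) over feasible profiles with n agents. -/
noncomputable def OPTval [DecidableEq α] [Fintype α] (f : Finset α → ℝ) (Ss : ℕ → Finset α)
    (n k : ℕ) : ℝ :=
  ((Finset.univ : Finset (Fin n → Finset α)).filter
      (fun y => ∀ i : Fin n, y i ⊆ Ss (i : ℕ) ∧ (y i).card ≤ k)).sup'
    ⟨(fun _ => ∅), by simp⟩ (fun y => f (Finset.univ.biUnion (fun i => y i)))

namespace S15

def cov (A B e : ℕ) : Finset ℕ := if A ≤ e ∧ e < B then {e - A, e} else {e}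

def covd (A B : ℕ) (s : Finset ℕ) : Finset ℕ := s.biUnion (cov A B)

lemma mem_cov_self (A B e : ℕ) : e ∈ cov A B e := by
  unfold cov; split_ifs <;> simp

lemma cov_card_le (A B e : ℕ) : (cov A B e).card ≤ 2 := by
  unfold cov; split_ifs
  · exact (card_insert_le _ _).trans (by simp)
  · simp

lemma covd_union (A B : ℕ) (s t : Finset ℕ) :
    covd A B (s ∪ t) = covd A B s ∪ covd A B t := by
  unfold covd; ext u
  simp only [mem_biUnion, mem_union]
  constructor
  · rintro ⟨e, he | he, hu⟩
    · exact Or.inl ⟨e, he, hu⟩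
    · exact Or.inr ⟨e, he, hu⟩
  · rintro (⟨e, he, hu⟩ | ⟨e, he, hu⟩)
    · exact ⟨e, Or.inl he, hu⟩
    · exact ⟨e, Or.inr he, hu⟩

lemma subset_covd (A B : ℕ) (s : Finset ℕ) : s ⊆ covd A B s :=
  fun e he => mem_biUnion.2 ⟨e, he, mem_cov_self A B e⟩

lemma covd_mono {A B : ℕ} {s t : Finset ℕ} (h : s ⊆ t) : covd A B s ⊆ covd A B t :=
  biUnion_subset_biUnion_of_subset_left _ h

lemma covd_eq_self {A B : ℕ} {s : Finset ℕ} (h : ∀ e ∈ s, e < A ∨ B ≤ e) :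
    covd A B s = s := by
  unfold covd
  have h2 : ∀ e ∈ s, cov A B e = {e} := by
    intro e he
    unfold cov
    rw [if_neg (by have := h e he; omega)]
  rw [biUnion_congr rfl h2, biUnion_singleton_eq_self]

lemma card_covd_le (A B : ℕ) (s : Finset ℕ) : (covd A B s).card ≤ 2 * s.card := by
  calc (covd A B s).card ≤ ∑ e ∈ s, (cov A B e).card := card_biUnion_le
  _ ≤ ∑ _e ∈ s, 2 := sum_le_sum fun e _ => cov_card_le A B e
  _ = 2 * s.card := by rw [sum_const, smul_eq_mul, mul_comm]

lemma card_covd_union_le {A B : ℕ} (s P : Finset ℕ)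
    (h : ∀ e ∈ s, (cov A B e \ covd A B P).card ≤ 1) :
    (covd A B (s ∪ P)).card ≤ (covd A B P).card + s.card := by
  have h1 : covd A B s \ covd A B P ⊆ s.biUnion (fun e => cov A B e \ covd A B P) := by
    intro u hu
    rw [mem_sdiff] at hu
    obtain ⟨e, he, hue⟩ := mem_biUnion.1 hu.1
    exact mem_biUnion.2 ⟨e, he, mem_sdiff.2 ⟨hue, hu.2⟩⟩
  calc (covd A B (s ∪ P)).card
      = (covd A B s \ covd A B P).card + (covd A B P).card := by
        rw [covd_union, card_sdiff_add_card]
    _ ≤ (s.biUnion fun e => cov A B e \ covd A B P).card + (covd A B P).card :=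
        Nat.add_le_add_right (card_le_card h1) _
    _ ≤ (∑ e ∈ s, (cov A B e \ covd A B P).card) + (covd A B P).card :=
        Nat.add_le_add_right card_biUnion_le _
    _ ≤ (∑ _e ∈ s, 1) + (covd A B P).card :=
        Nat.add_le_add_right (sum_le_sum h) _
    _ = s.card + (covd A B P).card := by simp
    _ = (covd A B P).card + s.card := add_comm _ _

lemma cov_sdiff_card_le_one {A B e : ℕ} (t : Finset ℕ) (h : A ≤ e → e < B → e - A ∈ t) :
    (cov A B e \ t).card ≤ 1 := by
  unfold cov; split_ifs with hc
  · have hsub : ({e - A, e} : Finset ℕ) \ t ⊆ {e} := by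
      intro u hu
      rw [mem_sdiff] at hu
      rcases mem_insert.1 hu.1 with rfl | hu1
      · exact absurd (h hc.1 hc.2) hu.2
      · exact hu1
    exact (card_le_card hsub).trans (by simp)
  · exact (card_le_card sdiff_subset).trans (by simp)

def ivl (N a b : ℕ) : Finset (Fin N) := univ.filter (fun e => a ≤ e.val ∧ e.val < b)

lemma ivl_subset {N a b a' b' : ℕ} (h1 : a' ≤ a) (h2 : b ≤ b') : ivl N a b ⊆ ivl N a' b' := by
  intro e he
  simp only [ivl, mem_filter, mem_univ, true_and] at he ⊢
  omega

lemma image_val_ivl {N a b : ℕ} (h : b ≤ N) : (ivl N a b).image Fin.val = Finset.Ico a b := by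
  ext u
  simp only [ivl, mem_image, mem_filter, mem_univ, true_and, mem_Ico]
  constructor
  · rintro ⟨e, he, rfl⟩; exact he
  · intro hu; exact ⟨⟨u, lt_of_lt_of_le hu.2 h⟩, hu, rfl⟩

lemma card_ivl {N a b : ℕ} (h : b ≤ N) : (ivl N a b).card = b - a := by
  rw [← Nat.card_Ico a b, ← image_val_ivl h]
  exact (card_image_of_injective _ Fin.val_injective).symm

lemma val_ivl_mem {N a b : ℕ} {e : ℕ} (h : e ∈ (ivl N a b).image Fin.val) : a ≤ e ∧ e < b := by
  simp only [ivl, mem_image, mem_filter, mem_univ, true_and] at h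
  obtain ⟨u, hu, rfl⟩ := h; exact hu

lemma mk_mem_ivl {N a b u : ℕ} {hN : u < N} :
    (⟨u, hN⟩ : Fin N) ∈ ivl N a b ↔ a ≤ u ∧ u < b := by
  simp [ivl]

lemma pref_succ {α : Type*} [DecidableEq α] (x : ℕ → Finset α) (i : ℕ) :
    pref x (i+1) = x i ∪ pref x i := by
  unfold pref; rw [range_add_one, biUnion_insert]

end S15


set_option maxHeartbeats 1000000 in
open S15 in
/-- Hard instance for the case m(n−1) ≥ k (Figure 2b in the paper). -/
theorem stmt15 (n k m : ℕ) (hn : 2 ≤ n) (hk : 1 ≤ k) (hmk : k ≤ m * (n - 1)) :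
    ∃ (N : ℕ) (f : Finset (Fin N) → ℝ) (Ss x z : ℕ → Finset (Fin N)),
      f ∅ = 0 ∧ IsMonotoneFn f ∧ IsSubmodularFn f ∧
      AugGreedy f Ss k m n x z ∧
      f ((Finset.range n).biUnion x) = ((k * n : ℕ) : ℝ) ∧
      OPTval f Ss n k = ((2 * k * (n - 1) + k : ℕ) : ℝ) ∧
      f ((Finset.range n).biUnion x) / OPTval f Ss n k = (n : ℝ) / (2 * (n : ℝ) - 1) := by
  classical
  obtain ⟨p, rfl⟩ : ∃ p, n = p + 2 := ⟨n - 2, by omega⟩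
  -- arithmetic kit
  have rmul : ∀ i j : ℕ, i ≤ j → i*k ≤ j*k := fun i j h => Nat.mul_le_mul_right k h
  have rp1 : (p+1)*k = p*k + k := by ring
  have rp2 : (p+2)*k = p*k + 2*k := by ring
  have r0 : 0*k = 0 := by ring
  -- abbreviations: A = n*k = p*k+2*k, B = (2n-1)k = p*k+p*k+3*k, N = 2nk = p*k+p*k+4*k
  set f : Finset (Fin (p*k+p*k+4*k)) → ℝ :=
    fun S => ((covd (p*k+2*k) (p*k+p*k+3*k) (S.image Fin.val)).card : ℝ) with hf
  set x : ℕ → Finset (Fin (p*k+p*k+4*k)) :=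
    fun i => ivl (p*k+p*k+4*k) (i*k) (i*k+k) with hx
  set z : ℕ → Finset (Fin (p*k+p*k+4*k)) := fun i =>
    if i = 0 then ivl (p*k+p*k+4*k) (p*k+p*k+3*k) (p*k+p*k+3*k + min k m)
    else ivl (p*k+p*k+4*k) (p*k+i*k+k) (p*k+i*k+k + min k m) with hz
  set Ss : ℕ → Finset (Fin (p*k+p*k+4*k)) := fun i =>
    x i ∪ (if i = 0 then ivl (p*k+p*k+4*k) (p*k+p*k+3*k) (p*k+p*k+4*k)
           else ivl (p*k+p*k+4*k) (p*k+i*k+k) (p*k+i*k+2*k)) with hSs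
  have himx : ∀ i, i < p+2 → (x i).image Fin.val = Finset.Ico (i*k) (i*k+k) := by
    intro i hi
    have h1 : i*k ≤ (p+1)*k := rmul i (p+1) (by omega)
    simp only [hx]
    exact image_val_ivl (by omega)
  have hprefx : ∀ i, i ≤ p+2 → (pref x i).image Fin.val = Finset.Ico 0 (i*k) := by
    intro i
    induction i with
    | zero => intro _; simp [pref]
    | succ i ih =>
      intro hi
      rw [pref_succ, image_union, himx i (by omega), ih (by omega), union_comm,
        Finset.Ico_union_Ico_eq_Ico (Nat.zero_le _) (by omega)]
      congr 1
      ring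
  have hcovIco : ∀ b, b ≤ p*k+2*k →
      covd (p*k+2*k) (p*k+p*k+3*k) (Finset.Ico 0 b) = Finset.Ico 0 b := by
    intro b hb
    apply covd_eq_self
    intro e he
    rw [mem_Ico] at he
    left; omega
  have hfpref : ∀ i, i ≤ p+2 → f (pref x i) = ((i*k : ℕ) : ℝ) := by
    intro i hi
    have h1 : i*k ≤ (p+2)*k := rmul i (p+2) hi
    simp only [hf]
    rw [hprefx i hi, hcovIco _ (by omega)]
    simp
  -- goal 1
  have hg1 : f ∅ = 0 := by simp [hf, covd]
  -- goal 2
  have hg2 : IsMonotoneFn f := by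
    intro A B hAB
    simp only [hf]
    exact_mod_cast card_le_card (covd_mono (image_subset_image hAB))
  -- goal 3
  have hg3 : IsSubmodularFn f := by
    intro A B hAB s hs
    have key : ∀ C : Finset (Fin (p*k+p*k+4*k)), f (insert s C) =
        f C + ((cov (p*k+2*k) (p*k+p*k+3*k) s.val
          \ covd (p*k+2*k) (p*k+p*k+3*k) (C.image Fin.val)).card : ℝ) := by
      intro C
      simp only [hf]
      rw [image_insert]
      have h1 : covd (p*k+2*k) (p*k+p*k+3*k) (insert s.val (C.image Fin.val)) =
          cov (p*k+2*k) (p*k+p*k+3*k) s.val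
            ∪ covd (p*k+2*k) (p*k+p*k+3*k) (C.image Fin.val) := biUnion_insert
      rw [h1, ← card_sdiff_add_card]
      push_cast; ring
    rw [key A, key B]
    have hsub2 : cov (p*k+2*k) (p*k+p*k+3*k) s.val
        \ covd (p*k+2*k) (p*k+p*k+3*k) (B.image Fin.val) ⊆
        cov (p*k+2*k) (p*k+p*k+3*k) s.val
        \ covd (p*k+2*k) (p*k+p*k+3*k) (A.image Fin.val) :=
      sdiff_subset_sdiff (Finset.Subset.refl _) (covd_mono (image_subset_image hAB))
    have hle := card_le_card hsub2
    have hle2 := (Nat.cast_le (α := ℝ)).2 hle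
    linarith
  -- goal 4 : AugGreedy
  have hg4 : AugGreedy f Ss k m (p+2) x z := by
    intro i hi
    have rik : i*k ≤ p*k+k := by
      have := rmul i (p+1) (by omega)
      omega
    have hPcov : covd (p*k+2*k) (p*k+p*k+3*k) (Finset.Ico 0 (i*k)) = Finset.Ico 0 (i*k) :=
      hcovIco _ (by omega)
    have hclaim : ∀ e : ℕ, e ∈ (Ss i ∪ pref z i).image Fin.val →
        p*k+2*k ≤ e → e < p*k+p*k+3*k → e - (p*k+2*k) ∈ Finset.Ico 0 (i*k) := by
      intro e he h1 h2
      rw [mem_Ico]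
      refine ⟨Nat.zero_le _, ?_⟩
      rw [image_union, mem_union] at he
      rcases he with he | he
      · simp only [hSs, hx] at he
        rw [image_union, mem_union] at he
        rcases he with he | he
        · have := val_ivl_mem he; omega
        · by_cases h0 : i = 0
          · rw [if_pos h0] at he
            have := val_ivl_mem he; omega
          · rw [if_neg h0] at he
            have := val_ivl_mem he; omega
      · obtain ⟨u, hu, rfl⟩ := mem_image.1 he
        simp only [pref] at hu
        obtain ⟨j, hj, hu'⟩ := mem_biUnion.1 hu
        have hji : j < i := mem_range.1 hj
        have hjk : j*k ≤ i*k := rmul j i (by omega)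
        by_cases h0 : j = 0
        · subst h0
          simp only [hz, if_pos rfl] at hu'
          have := val_ivl_mem (mem_image_of_mem Fin.val hu')
          omega
        · simp only [hz, if_neg h0] at hu'
          have hval := val_ivl_mem (mem_image_of_mem Fin.val hu')
          omega
    constructor
    · refine ⟨?_, ?_, ?_⟩
      · have hxs : x i ⊆ Ss i := by
          simp only [hSs]; exact subset_union_left
        exact hxs.trans subset_union_left
      · have hc : (x i).card = k := by
          simp only [hx]
          rw [card_ivl (by omega)]
          omega
        omega
      · intro c hc hcard
        have hRHS : f (x i ∪ pref x i) = ((i*k + k : ℕ) : ℝ) := by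
          rw [← pref_succ, hfpref (i+1) (by omega)]
          congr 1
          ring
        rw [hRHS]
        simp only [hf]
        rw [image_union, hprefx i (by omega)]
        have hper : ∀ e ∈ c.image Fin.val,
            (cov (p*k+2*k) (p*k+p*k+3*k) e
              \ covd (p*k+2*k) (p*k+p*k+3*k) (Finset.Ico 0 (i*k))).card ≤ 1 := by
          intro e he
          rw [hPcov]
          exact cov_sdiff_card_le_one _ (hclaim e (mem_of_subset (image_subset_image hc) he))
        have hb := card_covd_union_le (c.image Fin.val) (Finset.Ico 0 (i*k)) hper
        rw [hPcov] at hb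
        have hcc : (c.image Fin.val).card ≤ k := card_image_le.trans hcard
        have hfin : (covd (p*k+2*k) (p*k+p*k+3*k)
            (c.image Fin.val ∪ Finset.Ico 0 (i*k))).card ≤ i*k + k := by
          simp only [Nat.card_Ico, Nat.sub_zero] at hb
          omega
        exact_mod_cast hfin
    · refine ⟨z i, ∅, (union_empty _).symm, ?_, ?_, ?_, empty_subset _, by simp⟩
      · by_cases h0 : i = 0
        · subst h0
          simp only [hz, hSs, if_pos rfl]
          exact (ivl_subset le_rfl (by omega)).trans subset_union_right
        · simp only [hz, hSs, if_neg h0]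
          exact (ivl_subset le_rfl (by omega)).trans subset_union_right
      · by_cases h0 : i = 0
        · subst h0
          simp only [hz, if_pos rfl]
          rw [card_ivl (by omega)]
          omega
        · simp only [hz, if_neg h0]
          rw [card_ivl (by omega)]
          omega
      · intro w hw hwcard
        have hP1 : (pref x (i+1)).image Fin.val = Finset.Ico 0 (i*k+k) := by
          rw [hprefx (i+1) (by omega)]
          congr 1
          ring
        have hPcov1 : covd (p*k+2*k) (p*k+p*k+3*k) (Finset.Ico 0 (i*k+k))
            = Finset.Ico 0 (i*k+k) := hcovIco _ (by omega)
        have hfP1 : f (pref x (i+1)) = ((i*k+k : ℕ) : ℝ) := by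
          simp only [hf]
          rw [hP1, hPcov1]
          simp
        have hwper : ∀ e ∈ w.image Fin.val,
            (cov (p*k+2*k) (p*k+p*k+3*k) e
              \ covd (p*k+2*k) (p*k+p*k+3*k) (Finset.Ico 0 (i*k+k))).card ≤ 1 := by
          intro e he
          rw [hPcov1]
          apply cov_sdiff_card_le_one
          intro h1 h2
          rw [mem_Ico]
          refine ⟨Nat.zero_le _, ?_⟩
          have he' : e ∈ (Ss i).image Fin.val := mem_of_subset (image_subset_image hw) he
          simp only [hSs, hx] at he'
          rw [image_union, mem_union] at he'
          rcases he' with he' | he'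
          · have := val_ivl_mem he'; omega
          · by_cases h0 : i = 0
            · rw [if_pos h0] at he'
              have := val_ivl_mem he'; omega
            · rw [if_neg h0] at he'
              have := val_ivl_mem he'; omega
        have hwb : f (w ∪ pref x (i+1)) ≤ ((i*k + k + min k m : ℕ) : ℝ) := by
          simp only [hf]
          rw [image_union, hP1]
          have hb := card_covd_union_le (w.image Fin.val) (Finset.Ico 0 (i*k+k)) hwper
          rw [hPcov1] at hb
          have hcc : (w.image Fin.val).card ≤ min k m := card_image_le.trans hwcard
          have hfin : (covd (p*k+2*k) (p*k+p*k+3*k)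
              (w.image Fin.val ∪ Finset.Ico 0 (i*k+k))).card ≤ i*k + k + min k m := by
            simp only [Nat.card_Ico, Nat.sub_zero] at hb
            omega
          exact_mod_cast hfin
        have hzb : ((i*k + k + min k m : ℕ) : ℝ) ≤ f (z i ∪ pref x (i+1)) := by
          simp only [hf]
          rw [image_union, hP1]
          have hsub := subset_covd (p*k+2*k) (p*k+p*k+3*k)
            ((z i).image Fin.val ∪ Finset.Ico 0 (i*k+k))
          have hcard2 := card_le_card hsub
          have hzcard : ((z i).image Fin.val).card = min k m := by
            rw [card_image_of_injective _ Fin.val_injective]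
            by_cases h0 : i = 0
            · simp only [hz]
              rw [if_pos h0, card_ivl (by omega)]
              omega
            · simp only [hz]
              rw [if_neg h0, card_ivl (by omega)]
              omega
          have hdisj : Disjoint ((z i).image Fin.val) (Finset.Ico 0 (i*k+k)) := by
            rw [Finset.disjoint_left]
            intro u hu hu2
            rw [mem_Ico] at hu2
            by_cases h0 : i = 0
            · have h00 : i*k = 0 := by rw [h0]; ring
              simp only [hz, if_pos h0] at hu
              have := val_ivl_mem hu
              omega
            · simp only [hz, if_neg h0] at hu
              have := val_ivl_mem hu
              omega
          have hucard : (((z i).image Fin.val) ∪ Finset.Ico 0 (i*k+k)).card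
              = min k m + (i*k+k) := by
            rw [card_union_of_disjoint hdisj, hzcard]
            simp
          have hfin : i*k + k + min k m ≤ (covd (p*k+2*k) (p*k+p*k+3*k)
              (((z i).image Fin.val) ∪ Finset.Ico 0 (i*k+k))).card := by
            omega
          exact_mod_cast hfin
        show marg f w (pref x (i+1)) ≤ marg f (z i) (pref x (i+1))
        unfold marg
        linarith
  -- goal 5
  have hg5 : f ((Finset.range (p+2)).biUnion x) = ((k*(p+2) : ℕ) : ℝ) := by
    have hpn : (Finset.range (p+2)).biUnion x = pref x (p+2) := rfl
    rw [hpn, hfpref (p+2) le_rfl]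
    congr 1
    ring
  -- goal 6
  have hg6 : OPTval f Ss (p+2) k = ((2*k*(p+2-1)+k : ℕ) : ℝ) := by
    have rt : 2*k*(p+2-1) = p*k+p*k+2*k := by
      have h : p+2-1 = p+1 := by omega
      rw [h]; ring
    unfold OPTval
    apply le_antisymm
    · apply Finset.sup'_le
      intro y hy
      rw [mem_filter] at hy
      have hy2 := hy.2
      have hcard : ∀ i : Fin (p+2),
          (covd (p*k+2*k) (p*k+p*k+3*k) ((y i).image Fin.val)).card ≤
          (if (i:ℕ) = 0 then k else 2*k) := by
        intro i
        by_cases h0 : (i:ℕ) = 0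
        · rw [if_pos h0]
          have hsub : y i ⊆ Ss (i:ℕ) := (hy2 i).1
          rw [h0] at hsub
          have hval : ∀ e ∈ (y i).image Fin.val, e < p*k+2*k ∨ p*k+p*k+3*k ≤ e := by
            intro e he
            have he' : e ∈ (Ss 0).image Fin.val := mem_of_subset (image_subset_image hsub) he
            simp only [hSs, hx, if_pos rfl] at he'
            rw [image_union, mem_union] at he'
            rcases he' with h | h
            · have := val_ivl_mem h; left; omega
            · have := val_ivl_mem h; right; omega
          rw [covd_eq_self hval, card_image_of_injective _ Fin.val_injective]
          exact (hy2 i).2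
        · rw [if_neg h0]
          calc (covd (p*k+2*k) (p*k+p*k+3*k) ((y i).image Fin.val)).card
              ≤ 2 * ((y i).image Fin.val).card := card_covd_le _ _ _
          _ ≤ 2 * k := by
              have h1 : ((y i).image Fin.val).card ≤ (y i).card := card_image_le
              have h2 := (hy2 i).2
              omega
      have hsum : (∑ i : Fin (p+1+1), (if (i:ℕ) = 0 then k else 2*k)) = 2*k*(p+2-1)+k := by
        rw [Fin.sum_univ_succ]
        simp only [Fin.val_zero, if_pos, Fin.val_succ]
        rw [Finset.sum_congr rfl (fun i _ => if_neg (Nat.succ_ne_zero _)), sum_const,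
          card_univ, Fintype.card_fin]
        have r4 : (p+1)*(2*k) = p*k+p*k+2*k := by ring
        simp only [smul_eq_mul]
        omega
      have himU : (univ.biUnion (fun i => y i)).image Fin.val
          = (univ : Finset (Fin (p+2))).biUnion (fun i => (y i).image Fin.val) := by
        ext u
        simp only [mem_image, mem_biUnion, mem_univ, true_and]
        constructor
        · rintro ⟨e, ⟨i, hei⟩, rfl⟩
          exact ⟨i, e, hei, rfl⟩
        · rintro ⟨i, e, hei, rfl⟩
          exact ⟨e, ⟨i, hei⟩, rfl⟩
      have hF : (covd (p*k+2*k) (p*k+p*k+3*k)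
          ((univ.biUnion (fun i => y i)).image Fin.val)).card ≤ 2*k*(p+2-1)+k := by
        rw [himU]
        show ((univ.biUnion fun i => (y i).image Fin.val).biUnion
          (cov (p*k+2*k) (p*k+p*k+3*k))).card ≤ _
        rw [biUnion_biUnion]
        calc ((univ : Finset (Fin (p+2))).biUnion
              fun i => ((y i).image Fin.val).biUnion (cov (p*k+2*k) (p*k+p*k+3*k))).card
            ≤ ∑ i : Fin (p+2),
              (((y i).image Fin.val).biUnion (cov (p*k+2*k) (p*k+p*k+3*k))).card :=
              card_biUnion_le
        _ ≤ ∑ i : Fin (p+2), (if (i:ℕ) = 0 then k else 2*k) := sum_le_sum (fun i _ => hcard i)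
        _ = 2*k*(p+2-1)+k := hsum
      simp only [hf]
      exact_mod_cast hF
    · set y0 : Fin (p+2) → Finset (Fin (p*k+p*k+4*k)) := fun i =>
        if (i:ℕ) = 0 then ivl (p*k+p*k+4*k) (p*k+p*k+3*k) (p*k+p*k+4*k)
        else ivl (p*k+p*k+4*k) (p*k+(i:ℕ)*k+k) (p*k+(i:ℕ)*k+2*k) with hy0
      have him : (univ.biUnion (fun i => y0 i)).image Fin.val
          = Finset.Ico (p*k+2*k) (p*k+p*k+4*k) := by
        ext u
        simp only [mem_image, mem_biUnion, mem_univ, true_and, mem_Ico]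
        constructor
        · rintro ⟨e, ⟨i, hei⟩, rfl⟩
          by_cases h0 : (i:ℕ) = 0
          · simp only [hy0, if_pos h0, ivl, mem_filter, mem_univ, true_and] at hei
            omega
          · simp only [hy0, if_neg h0, ivl, mem_filter, mem_univ, true_and] at hei
            have hiv : (i:ℕ) < p+2 := i.isLt
            have hik : (i:ℕ)*k ≤ (p+1)*k := rmul _ (p+1) (by omega)
            have h1k : 1*k ≤ (i:ℕ)*k := rmul 1 _ (by omega)
            omega
        · intro hu
          rcases le_or_gt (p*k+p*k+3*k) u with hc | hc
          · refine ⟨⟨u, by omega⟩, ⟨⟨0, by omega⟩, ?_⟩, rfl⟩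
            have hy00 : y0 ⟨0, by omega⟩
                = ivl (p*k+p*k+4*k) (p*k+p*k+3*k) (p*k+p*k+4*k) := by
              simp [hy0]
            rw [hy00, mk_mem_ivl]
            omega
          · obtain ⟨v, hv⟩ : ∃ v, u = p*k+2*k + v := ⟨u - (p*k+2*k), by omega⟩
            obtain ⟨q, r, hqr, hr⟩ : ∃ q r, v = k*q + r ∧ r < k :=
              ⟨v/k, v%k, (Nat.div_add_mod v k).symm, Nat.mod_lt _ (by omega)⟩
            have hkq : k*q = q*k := mul_comm k q
            have hqn : q + 1 < p+2 := by
              by_contra hc2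
              push_neg at hc2
              have h6 : (p+1)*k ≤ q*k := rmul _ _ (by omega)
              omega
            have hq1k : (q+1)*k = q*k + k := by ring
            refine ⟨⟨u, by omega⟩, ⟨⟨q+1, hqn⟩, ?_⟩, rfl⟩
            have hy0q : y0 ⟨q+1, hqn⟩
                = ivl (p*k+p*k+4*k) (p*k+(q+1)*k+k) (p*k+(q+1)*k+2*k) := by
              simp [hy0]
            rw [hy0q, mk_mem_ivl]
            constructor <;> omega
      have hcov2 : covd (p*k+2*k) (p*k+p*k+3*k) (Finset.Ico (p*k+2*k) (p*k+p*k+4*k)) =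
          Finset.Ico 0 (p*k+k) ∪ Finset.Ico (p*k+2*k) (p*k+p*k+4*k) := by
        ext u
        simp only [covd, mem_biUnion, mem_Ico, mem_union]
        constructor
        · rintro ⟨e, he, hu⟩
          unfold cov at hu
          split_ifs at hu with hcc
          · rcases mem_insert.1 hu with rfl | hu'
            · left; omega
            · rw [mem_singleton] at hu'
              subst hu'
              right; omega
          · rw [mem_singleton] at hu
            subst hu
            right; omega
        · rintro (h | h)
          · refine ⟨u + (p*k+2*k), by omega, ?_⟩
            unfold cov
            rw [if_pos (by omega)]
            exact mem_insert.2 (Or.inl (by omega))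
          · exact ⟨u, h, mem_cov_self _ _ _⟩
      have hcard2 : (Finset.Ico 0 (p*k+k) ∪ Finset.Ico (p*k+2*k) (p*k+p*k+4*k)).card
          = 2*k*(p+2-1)+k := by
        rw [card_union_of_disjoint (by
          rw [Finset.disjoint_left]
          intro a ha ha2
          rw [mem_Ico] at ha ha2
          omega)]
        rw [Nat.card_Ico, Nat.card_Ico]
        omega
      have hfy : f (univ.biUnion fun i => y0 i) = ((2*k*(p+2-1)+k : ℕ) : ℝ) := by
        simp only [hf]
        rw [him, hcov2, hcard2]
      refine (Finset.le_sup'_iff (H := _)).2 ?_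
      refine ⟨y0, ?_, le_of_eq hfy.symm⟩
      rw [mem_filter]
      refine ⟨mem_univ _, fun i => ?_⟩
      by_cases h0 : (i:ℕ) = 0
      · constructor
        · simp only [hy0, hSs]
          exact subset_union_right
        · simp only [hy0]
          rw [if_pos h0, card_ivl le_rfl]
          omega
      · have hiv : (i:ℕ) < p+2 := i.isLt
        have hik : (i:ℕ)*k ≤ (p+1)*k := rmul _ (p+1) (by omega)
        constructor
        · simp only [hy0, hSs]
          exact subset_union_right
        · simp only [hy0]
          rw [if_neg h0, card_ivl (by omega)]
          omega
  -- goal 7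
  have hg7 : f ((Finset.range (p+2)).biUnion x) / OPTval f Ss (p+2) k
      = ((p+2 : ℕ) : ℝ) / (2 * ((p+2 : ℕ) : ℝ) - 1) := by
    rw [hg5, hg6]
    have h1 : ((2*k*(p+2-1)+k : ℕ) : ℝ) = (k:ℝ) * (2*((p:ℝ)+2) - 1) := by
      have h : p+2-1 = p+1 := by omega
      rw [h]
      push_cast
      ring
    rw [h1]
    have hk0 : (1:ℝ) ≤ (k:ℝ) := by exact_mod_cast hk
    have hn0 : (0:ℝ) < 2*((p:ℝ)+2) - 1 := by
      have : (0:ℝ) ≤ (p:ℝ) := Nat.cast_nonneg p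
      linarith
    push_cast
    have hden : (0:ℝ) < (k:ℝ) * (2*((p:ℝ)+2) - 1) :=
      mul_pos (lt_of_lt_of_le zero_lt_one hk0) hn0
    rw [div_eq_div_iff (ne_of_gt hden) (ne_of_gt hn0)]
    ring
  exact ⟨p*k+p*k+4*k, f, Ss, x, z, hg1, hg2, hg3, hg4, hg5, hg6, hg7⟩
end

section
/- Let n = 2, k ≥ 1, m ≥ 0, let S_1, S_2 ⊆ S be action sets, and set β := min(m/k, 1). Let (x_i^ag, z_i^ag)_{i=1}^2 be any augmented greedy profile for (f, (S_1, S_2), k, m). Then f(x_1^ag ∪ x_2^ag) ≥ OPT(f,(S_i),k) · (1 + β)/(2 + β); in particular, if m ≥ k then f(x_1^ag ∪ x_2^ag) ≥ (2/3)·OPT(f,(S_i),k). -/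
open Finset

variable {α : Type*}

lemma marg_anti [DecidableEq α] {f : Finset α → ℝ}
    (hmono : IsMonotoneFn f) (hsub : IsSubmodularFn f)
    (A : Finset α) : ∀ C D : Finset α, C ⊆ D → f (A ∪ D) - f D ≤ f (A ∪ C) - f C := by
  induction A using Finset.induction_on with
  | empty => intro C D h; simpa using hmono C D h
  | @insert s A' hs ih =>
    intro C D hCD
    have h1 : f (insert s (A' ∪ D)) - f (A' ∪ D) ≤ f (insert s (A' ∪ C)) - f (A' ∪ C) := by
      by_cases hsD : s ∈ A' ∪ D
      · have e : insert s (A' ∪ D) = A' ∪ D := Finset.insert_eq_self.2 hsD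
        rw [e]
        have := hmono (A' ∪ C) (insert s (A' ∪ C)) (Finset.subset_insert _ _)
        linarith
      · exact hsub (A' ∪ C) (A' ∪ D) (Finset.union_subset_union_right hCD) s hsD
    have h2 := ih C D hCD
    rw [Finset.insert_union, Finset.insert_union]
    linarith

lemma sum_marg_le [DecidableEq α] {g : Finset α → ℝ} (hsub : IsSubmodularFn g)
    (Y : Finset α) : ∑ a ∈ Y, (g Y - g (Y.erase a)) ≤ g Y - g ∅ := by
  induction Y using Finset.induction_on with
  | empty => simp
  | @insert b T hb ih =>
    rw [Finset.sum_insert hb, Finset.erase_insert hb]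
    have hterm : ∀ a ∈ T, g (insert b T) - g ((insert b T).erase a) ≤ g T - g (T.erase a) := by
      intro a ha
      have hab : a ≠ b := by rintro rfl; exact hb ha
      have hkey := hsub (T.erase a) (insert b (T.erase a)) (Finset.subset_insert _ _) a
        (by simp [Finset.mem_insert, hab, Finset.mem_erase])
      rw [Finset.insert_erase ha] at hkey
      have e1 : insert a (insert b (T.erase a)) = insert b T := by
        rw [Finset.insert_comm, Finset.insert_erase ha]
      have e2 : (insert b T).erase a = insert b (T.erase a) :=
        Finset.erase_insert_of_ne hab.symm
      rw [e1] at hkey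
      rw [e2]
      linarith
    calc (g (insert b T) - g T) + ∑ a ∈ T, (g (insert b T) - g ((insert b T).erase a))
        ≤ (g (insert b T) - g T) + ∑ a ∈ T, (g T - g (T.erase a)) :=
          add_le_add_right (Finset.sum_le_sum hterm) _
      _ ≤ (g (insert b T) - g T) + (g T - g ∅) := add_le_add_right ih _
      _ = g (insert b T) - g ∅ := by ring

lemma exists_good_subset [DecidableEq α] {g : Finset α → ℝ}
    (hmono : IsMonotoneFn g) (hsub : IsSubmodularFn g) (h0 : g ∅ = 0) :
    ∀ n : ℕ, ∀ Y : Finset α, Y.card = n → ∀ m : ℕ, m ≤ n →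
      ∃ W : Finset α, W ⊆ Y ∧ W.card = m ∧ (m : ℝ) * g Y ≤ (n : ℝ) * g W := by
  intro n
  induction n using Nat.strong_induction_on with
  | _ n ih =>
    intro Y hY m hm
    rcases eq_or_lt_of_le hm with heq | hlt
    · exact ⟨Y, Finset.Subset.refl Y, by rw [hY, heq], by rw [heq]⟩
    rcases Nat.eq_zero_or_pos m with rfl | hm0
    · exact ⟨∅, Finset.empty_subset Y, Finset.card_empty, by simp [h0]⟩
    have hn2 : 2 ≤ n := by omega
    have hYne : Y.Nonempty := by rw [← Finset.card_pos, hY]; omega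
    have hn0 : (0:ℝ) < n := by exact_mod_cast Nat.lt_of_lt_of_le (by norm_num) hn2
    have hex : ∃ a ∈ Y, g Y - g (Y.erase a) ≤ g Y / n := by
      by_contra hc
      push_neg at hc
      have hlt2 : ∑ a ∈ Y, (g Y / n) < ∑ a ∈ Y, (g Y - g (Y.erase a)) :=
        Finset.sum_lt_sum_of_nonempty hYne hc
      rw [Finset.sum_const, hY, nsmul_eq_mul, mul_div_cancel₀ _ hn0.ne'] at hlt2
      have := sum_marg_le hsub Y
      rw [h0] at this
      linarith
    obtain ⟨a, ha, hav⟩ := hex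
    have hcard : (Y.erase a).card = n - 1 := by rw [Finset.card_erase_of_mem ha, hY]
    obtain ⟨W, hWsub, hWcard, hWineq⟩ := ih (n-1) (by omega) (Y.erase a) hcard m (by omega)
    refine ⟨W, hWsub.trans (Finset.erase_subset a Y), hWcard, ?_⟩
    have hcast : ((n - 1 : ℕ) : ℝ) = (n:ℝ) - 1 := by
      have h1n : 1 ≤ n := by omega
      push_cast [h1n]; ring
    rw [hcast] at hWineq
    have hEY : ((n:ℝ) - 1) * g Y ≤ (n:ℝ) * g (Y.erase a) := by
      have h := mul_le_mul_of_nonneg_left hav hn0.le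
      have h2 : (n:ℝ) * (g Y / n) = g Y := by field_simp
      rw [h2] at h
      nlinarith [h]
    have hgW : 0 ≤ g W := by
      have := hmono ∅ W (Finset.empty_subset W); linarith
    have hm0' : (0:ℝ) ≤ m := by positivity
    have hn1 : (1:ℝ) ≤ (n:ℝ) - 1 := by
      have : (2:ℝ) ≤ n := by exact_mod_cast hn2
      linarith
    nlinarith [mul_le_mul_of_nonneg_left hEY hm0', mul_le_mul_of_nonneg_left hWineq hn0.le]

lemma shift_mono [DecidableEq α] {f : Finset α → ℝ} (hmono : IsMonotoneFn f) (B : Finset α) :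
    IsMonotoneFn (fun W => f (W ∪ B) - f B) := by
  intro A A' h
  have := hmono (A ∪ B) (A' ∪ B) (Finset.union_subset_union_left h)
  simpa using this

lemma shift_sub [DecidableEq α] {f : Finset α → ℝ} (hmono : IsMonotoneFn f)
    (hsub : IsSubmodularFn f) (B : Finset α) :
    IsSubmodularFn (fun W => f (W ∪ B) - f B) := by
  intro A A' hAA' s hs
  simp only [Finset.insert_union]
  by_cases hsB : s ∈ B
  · have e1 : insert s (A ∪ B) = A ∪ B := Finset.insert_eq_self.2 (Finset.mem_union_right _ hsB)
    have e2 : insert s (A' ∪ B) = A' ∪ B := Finset.insert_eq_self.2 (Finset.mem_union_right _ hsB)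
    rw [e1, e2]; linarith
  · have hs' : s ∉ A' ∪ B := by simp [hs, hsB]
    have := hsub (A ∪ B) (A' ∪ B) (Finset.union_subset_union_left hAA') s hs'
    linarith

/-- For two agents the augmented greedy algorithm achieves a (1+β)/(2+β) fraction of the
optimum; in particular 2/3 when m ≥ k. -/
theorem stmt17 [DecidableEq α] [Fintype α] (f : Finset α → ℝ)
    (hnorm : f ∅ = 0) (hmono : IsMonotoneFn f) (hsub : IsSubmodularFn f)
    (k m : ℕ) (hk : 1 ≤ k)
    (Ss x z : ℕ → Finset α) (hag : AugGreedy f Ss k m 2 x z) :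
    f (x 0 ∪ x 1) ≥ OPTval f Ss 2 k * ((1 + min ((m : ℝ) / k) 1) / (2 + min ((m : ℝ) / k) 1)) ∧
    (k ≤ m → f (x 0 ∪ x 1) ≥ (2 / 3) * OPTval f Ss 2 k) := by

  have hk0 : (0:ℝ) < k := by exact_mod_cast hk
  have hβ0 : (0:ℝ) ≤ min ((m : ℝ) / k) 1 := le_min (by positivity) zero_le_one
  have hβ1 : min ((m : ℝ) / k) 1 ≤ 1 := min_le_right _ _
  obtain ⟨⟨hx0S, hx0card, hx0g⟩, zk, zr, hz0eq, hzkS, hzkcard, hzkmax, hzrS, hzrc⟩ :=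
    hag 0 (by norm_num)
  obtain ⟨⟨hx1S, hx1card, hx1g⟩, -⟩ := hag 1 (by norm_num)
  have hp0 : pref x 0 = ∅ := by simp [pref]
  have hq0 : pref z 0 = ∅ := by simp [pref]
  have hp1 : pref x (0 + 1) = x 0 := by simp [pref]
  have hp1' : pref x 1 = x 0 := by simp [pref]
  have hq1 : pref z 1 = z 0 := by simp [pref]
  rw [hp0, hq0] at hx0g
  simp only [Finset.union_empty] at hx0g
  rw [hp1', hq1] at hx1g
  simp only [marg, hp1] at hzkmax
  have hGcomm : f (x 1 ∪ x 0) = f (x 0 ∪ x 1) := by rw [Finset.union_comm]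
  have hzkG : f (zk ∪ x 0) ≤ f (x 0 ∪ x 1) := by
    rw [← hGcomm]
    refine hx1g zk ?_ (hzkcard.trans (Nat.min_le_left k m))
    exact (hz0eq ▸ Finset.subset_union_left).trans Finset.subset_union_right
  have haG : f (x 0) ≤ f (x 0 ∪ x 1) := hmono _ _ Finset.subset_union_left
  have key : ∀ Y Y1 : Finset α, Y ⊆ Ss 0 → Y.card ≤ k → Y1 ⊆ Ss 1 → Y1.card ≤ k →
      (1 + min ((m : ℝ) / k) 1) * f (Y ∪ Y1) ≤
        (2 + min ((m : ℝ) / k) 1) * f (x 0 ∪ x 1) := by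
    intro Y Y1 hYS hYc hY1S hY1c
    have hD0nn : 0 ≤ f (Y ∪ x 0) - f (x 0) := by
      have := hmono (x 0) (Y ∪ x 0) Finset.subset_union_right; linarith
    have hD0a : f (Y ∪ x 0) - f (x 0) ≤ f (x 0) := by
      have h1 := marg_anti hmono hsub Y ∅ (x 0) (Finset.empty_subset _)
      have h2 := hx0g Y hYS hYc
      simp only [Finset.union_empty, hnorm] at h1
      linarith
    have hY1G : f (Y1 ∪ x 0) ≤ f (x 0 ∪ x 1) := by
      rw [← hGcomm]
      exact hx1g Y1 (hY1S.trans Finset.subset_union_left) hY1c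
    have hchain : f (Y ∪ Y1) ≤ (f (Y ∪ x 0) - f (x 0)) + f (x 0 ∪ x 1) := by
      have h1 : f (Y ∪ Y1) ≤ f (Y ∪ (Y1 ∪ x 0)) :=
        hmono _ _ (Finset.union_subset_union_right Finset.subset_union_left)
      have h2 := marg_anti hmono hsub Y (x 0) (Y1 ∪ x 0) Finset.subset_union_right
      linarith
    have hkey : min ((m : ℝ) / k) 1 * (f (Y ∪ x 0) - f (x 0)) ≤ f (x 0 ∪ x 1) - f (x 0) := by
      rcases le_or_gt k m with hkm | hmk
      · have hβeq : min ((m : ℝ) / k) 1 = 1 := by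
          refine min_eq_right ?_
          rw [le_div_iff₀ hk0]
          have : (k:ℝ) ≤ m := by exact_mod_cast hkm
          linarith
        have hmin : min k m = k := min_eq_left hkm
        have := hzkmax Y hYS (by rw [hmin]; exact hYc)
        rw [hβeq]
        linarith
      · have hmin : min k m = m := min_eq_right hmk.le
        have hβeq : min ((m : ℝ) / k) 1 = (m : ℝ) / k := by
          refine min_eq_left ?_
          rw [div_le_one hk0]
          exact_mod_cast hmk.le
        rcases le_or_gt Y.card m with hYm | hmY
        · have := hzkmax Y hYS (by rw [hmin]; exact hYm)
          nlinarith [hzkG, hβ1, hD0nn]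
        · obtain ⟨W, hWY, hWc, hWineq⟩ :=
            exists_good_subset (shift_mono hmono (x 0)) (shift_sub hmono hsub (x 0))
              (by simp [hnorm]) Y.card Y rfl m hmY.le
          have hWzk := hzkmax W (hWY.trans hYS) (by rw [hmin]; exact hWc.le)
          have hWnn : 0 ≤ f (W ∪ x 0) - f (x 0) := by
            have := hmono (x 0) (W ∪ x 0) Finset.subset_union_right; linarith
          have hYk : ((Y.card : ℕ) : ℝ) ≤ (k : ℝ) := by exact_mod_cast hYc
          rw [hβeq, div_mul_eq_mul_div, div_le_iff₀ hk0]
          nlinarith [hzkG, hWzk, hWineq, hWnn, hYk]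
    nlinarith [hchain, hD0a, hkey, hβ0, hD0nn]
  have h1β : (0:ℝ) < 1 + min ((m : ℝ) / k) 1 := by linarith
  have h2β : (0:ℝ) < 2 + min ((m : ℝ) / k) 1 := by linarith
  have hOPTle : OPTval f Ss 2 k ≤
      ((2 + min ((m : ℝ) / k) 1) * f (x 0 ∪ x 1)) / (1 + min ((m : ℝ) / k) 1) := by
    apply Finset.sup'_le
    intro y hy
    rw [Finset.mem_filter] at hy
    have hy0 := hy.2 0
    have hy1 := hy.2 1
    have hb : Finset.univ.biUnion (fun i : Fin 2 => y i) = y 0 ∪ y 1 := by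
      ext t; simp [Fin.exists_fin_two]
    rw [hb, le_div_iff₀ h1β]
    have := key (y 0) (y 1) hy0.1 hy0.2 hy1.1 hy1.2
    linarith
  constructor
  · rw [ge_iff_le]
    calc OPTval f Ss 2 k * ((1 + min ((m : ℝ) / k) 1) / (2 + min ((m : ℝ) / k) 1))
        ≤ (((2 + min ((m : ℝ) / k) 1) * f (x 0 ∪ x 1)) / (1 + min ((m : ℝ) / k) 1)) *
            ((1 + min ((m : ℝ) / k) 1) / (2 + min ((m : ℝ) / k) 1)) := by
          exact mul_le_mul_of_nonneg_right hOPTle (by positivity)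
      _ = f (x 0 ∪ x 1) := by field_simp
  · intro hkm
    have hβeq : min ((m : ℝ) / k) 1 = 1 := by
      refine min_eq_right ?_
      rw [le_div_iff₀ hk0]
      have : (k:ℝ) ≤ m := by exact_mod_cast hkm
      linarith
    rw [hβeq] at hOPTle
    rw [ge_iff_le]
    nlinarith [hOPTle]
end
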